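/- Let (X, Σ, μ) be a finite measure space, H a separable Hilbert space, and v_n, v ∈ L¹(X, μ; H) with v_n converging weakly to v in L¹(X, μ; H). If φ : H → [0, +∞] is convex and lower semicontinuous and g ∈ L^∞(X, μ) with g ≥ 0 μ-a.e., then ∫ g·φ(v) dμ ≤ liminf_{n→∞} ∫ g·φ(v_n) dμ. -/

import Mathlib

open MeasureTheory Filter Topology
open scoped ENNReal

private lemma aux_mul_liminf (a : ℝ≥0∞) (f : ℕ → ℝ≥0∞) :
    a * Filter.liminf f atTop ≤ Filter.liminf (fun i => a * f i) atTop := by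
  rw [Filter.liminf_eq_iSup_iInf_of_nat, Filter.liminf_eq_iSup_iInf_of_nat, ENNReal.mul_iSup]
  exact iSup_mono fun n => le_iInf₂ fun i hi => mul_le_mul_right (iInf₂_le i hi) a

theorem weak_lsc_convex_integral
    {X : Type*} [MeasurableSpace X] (μ : Measure X) [IsFiniteMeasure μ]
    {H : Type*} [NormedAddCommGroup H] [InnerProductSpace ℝ H]
    [TopologicalSpace.SeparableSpace H]
    (v : ℕ → Lp H 1 μ) (vlim : Lp H 1 μ)
    (hweak : ∀ f : Lp H 1 μ →L[ℝ] ℝ,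
      Tendsto (fun n => f (v n)) atTop (𝓝 (f vlim)))
    (φ : H → ℝ≥0∞)
    (hφconv : ∀ a b : H, ∀ t : ℝ, 0 ≤ t → t ≤ 1 →
      φ (t • a + (1 - t) • b) ≤ ENNReal.ofReal t * φ a + ENNReal.ofReal (1 - t) * φ b)
    (hφlsc : LowerSemicontinuous φ)
    (g : X → ℝ) (hg : MemLp g ⊤ μ) (hg0 : 0 ≤ᵐ[μ] g) :
    ∫⁻ x, ENNReal.ofReal (g x) * φ (vlim x) ∂μ ≤
      atTop.liminf fun n => ∫⁻ x, ENNReal.ofReal (g x) * φ ((v n) x) ∂μ := by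
  borelize H
  set F : Lp H 1 μ → ℝ≥0∞ := fun w => ∫⁻ x, ENNReal.ofReal (g x) * φ (w x) ∂μ with hF
  -- measurability
  have hgm : AEMeasurable (fun x => ENNReal.ofReal (g x)) μ :=
    ENNReal.measurable_ofReal.comp_aemeasurable hg.aestronglyMeasurable.aemeasurable
  have hmeas : ∀ w : Lp H 1 μ, AEMeasurable (fun x => ENNReal.ofReal (g x) * φ (w x)) μ := by
    intro w
    exact hgm.mul (hφlsc.measurable.comp_aemeasurable (Lp.aestronglyMeasurable w).aemeasurable)
  -- convexity of F
  have hconvF : ∀ (a b : Lp H 1 μ) (t : ℝ), 0 ≤ t → t ≤ 1 →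
      F (t • a + (1 - t) • b) ≤ ENNReal.ofReal t * F a + ENNReal.ofReal (1 - t) * F b := by
    intro a b t ht0 ht1
    have hcoe : ((t • a + (1 - t) • b : Lp H 1 μ) : X → H)
        =ᵐ[μ] fun x => t • (a x) + (1 - t) • (b x) := by
      filter_upwards [Lp.coeFn_add (t • a) ((1 - t) • b), Lp.coeFn_smul t a,
        Lp.coeFn_smul (1 - t) b] with x h1 h2 h3
      simp only [h1, Pi.add_apply, h2, h3, Pi.smul_apply]
    have step1 : F (t • a + (1 - t) • b) ≤
        ∫⁻ x, (ENNReal.ofReal t * (ENNReal.ofReal (g x) * φ (a x))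
          + ENNReal.ofReal (1 - t) * (ENNReal.ofReal (g x) * φ (b x))) ∂μ := by
      have heq : F (t • a + (1 - t) • b)
          = ∫⁻ x, ENNReal.ofReal (g x) * φ (t • (a x) + (1 - t) • (b x)) ∂μ :=
        lintegral_congr_ae (hcoe.mono fun x hx => by simp only [hx])
      rw [heq]
      refine lintegral_mono_ae ?_
      filter_upwards with x
      calc ENNReal.ofReal (g x) * φ (t • (a x) + (1 - t) • (b x))
          ≤ ENNReal.ofReal (g x) *
            (ENNReal.ofReal t * φ (a x) + ENNReal.ofReal (1 - t) * φ (b x)) :=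
            mul_le_mul_right (hφconv (a x) (b x) t ht0 ht1) _
        _ = ENNReal.ofReal t * (ENNReal.ofReal (g x) * φ (a x))
            + ENNReal.ofReal (1 - t) * (ENNReal.ofReal (g x) * φ (b x)) := by ring
    refine step1.trans (le_of_eq ?_)
    rw [lintegral_add_left' ((hmeas a).const_mul _),
      lintegral_const_mul' _ _ ENNReal.ofReal_ne_top,
      lintegral_const_mul' _ _ ENNReal.ofReal_ne_top]
  -- main argument: fix c above the liminf
  refine le_of_forall_gt_imp_ge_of_dense fun c hc => ?_
  obtain ⟨s, hs_mono, hs⟩ := extraction_of_frequently_atTop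
    (frequently_lt_of_liminf_lt (by isBoundedDefault) hc)
  set u : ℕ → Lp H 1 μ := fun j => v (s j) with hu
  have hweaku : ∀ f : Lp H 1 μ →L[ℝ] ℝ, Tendsto (fun j => f (u j)) atTop (𝓝 (f vlim)) :=
    fun f => (hweak f).comp hs_mono.tendsto_atTop
  set S : Set (Lp H 1 μ) := convexHull ℝ (Set.range u) with hSdef
  have hS : Convex ℝ S := convex_convexHull ℝ _
  -- every element of S has F ≤ c
  have hFS : ∀ w ∈ S, F w ≤ c := by
    intro w hw
    have hsub : S ⊆ {w : Lp H 1 μ | F w ≤ c} := by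
      apply convexHull_min
      · rintro _ ⟨j, rfl⟩
        exact (hs j).le
      · intro a ha b hb ta tb hta htb hab
        have htb' : tb = 1 - ta := by linarith
        subst htb'
        calc F (ta • a + (1 - ta) • b)
            ≤ ENNReal.ofReal ta * F a + ENNReal.ofReal (1 - ta) * F b :=
              hconvF a b ta hta (by linarith)
          _ ≤ ENNReal.ofReal ta * c + ENNReal.ofReal (1 - ta) * c :=
              add_le_add (mul_le_mul_right ha _) (mul_le_mul_right hb _)
          _ = (ENNReal.ofReal ta + ENNReal.ofReal (1 - ta)) * c := by ring
          _ = 1 * c := by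
              rw [← ENNReal.ofReal_add hta (by linarith)]
              norm_num
          _ = c := one_mul c
    exact hsub hw
  -- vlim is in the strong closure of S (Mazur)
  have hinj : Function.Injective ((topDualPairing ℝ (Lp H 1 μ)).flip) := by
    intro x y hxy
    rw [NormedSpace.eq_iff_forall_dual_eq ℝ]
    intro f
    exact congrArg (fun z => z f) hxy
  have hvmem : vlim ∈ closure S := by
    have hwk : Tendsto (fun j => toWeakSpace ℝ (Lp H 1 μ) (u j)) atTop
        (𝓝 (toWeakSpace ℝ (Lp H 1 μ) vlim)) := by
      refine (WeakBilin.tendsto_iff_forall_eval_tendsto _ hinj).mpr ?_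
      intro f
      exact hweaku f
    have h1 : toWeakSpace ℝ (Lp H 1 μ) vlim ∈ closure (toWeakSpace ℝ (Lp H 1 μ) '' S) :=
      mem_closure_of_tendsto hwk (Eventually.of_forall fun j =>
        Set.mem_image_of_mem _ (subset_convexHull ℝ _ (Set.mem_range_self j)))
    rw [← hS.toWeakSpace_closure ℝ] at h1
    obtain ⟨z, hz, hz2⟩ := h1
    rwa [← (toWeakSpace ℝ (Lp H 1 μ)).injective hz2]
  -- get a sequence in S converging in Lp to vlim
  obtain ⟨w, hwS, hwlim⟩ := mem_closure_iff_seq_limit.mp hvmem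
  -- convergence in measure, then a.e. convergent subsequence
  have hTIM : TendstoInMeasure μ (fun n => (w n : X → H)) atTop vlim :=
    tendstoInMeasure_of_tendsto_Lp hwlim
  obtain ⟨ns, _hns_mono, hae⟩ := hTIM.exists_seq_tendsto_ae
  -- pointwise lower semicontinuity estimate, a.e.
  have hpt : ∀ᵐ x ∂μ, ENNReal.ofReal (g x) * φ (vlim x) ≤
      Filter.liminf (fun i => ENNReal.ofReal (g x) * φ ((w (ns i)) x)) atTop := by
    filter_upwards [hae] with x hx
    have h1 : φ (vlim x) ≤ Filter.liminf (fun i => φ ((w (ns i)) x)) atTop := by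
      rw [le_liminf_iff]
      intro y hy
      exact hx.eventually (hφlsc (vlim x) y hy)
    calc ENNReal.ofReal (g x) * φ (vlim x)
        ≤ ENNReal.ofReal (g x) * Filter.liminf (fun i => φ ((w (ns i)) x)) atTop :=
          mul_le_mul_right h1 _
      _ ≤ Filter.liminf (fun i => ENNReal.ofReal (g x) * φ ((w (ns i)) x)) atTop :=
          aux_mul_liminf _ _
  -- Fatou
  calc F vlim
      ≤ ∫⁻ x, Filter.liminf (fun i => ENNReal.ofReal (g x) * φ ((w (ns i)) x)) atTop ∂μ :=
        lintegral_mono_ae hpt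
    _ ≤ Filter.liminf (fun i => F (w (ns i))) atTop :=
        lintegral_liminf_le' fun i => hmeas (w (ns i))
    _ ≤ c := liminf_le_of_frequently_le
        (Frequently.of_forall fun i => hFS _ (hwS (ns i))) (by isBoundedDefault)
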